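/- The coproduct Δ defined on generators of U_h(sl(2)) by Δ(X)=X⊗1+1⊗X, Δ(Y)=Y⊗e^{hX}+e^{-hX}⊗Y, Δ(H)=H⊗e^{hX}+e^{-hX}⊗H is an algebra homomorphism, i.e., [Δ(X),Δ(Y)]=Δ(H), [Δ(H),Δ(X)]=(2/h)sinh(hΔ(X)), and [Δ(H),Δ(Y)]=-Δ(Y)cosh(hΔ(X))-cosh(hΔ(X))Δ(Y). -/

import Mathlib

open NormedSpace

noncomputable def sinhA {A : Type*} [NormedRing A] [NormedAlgebra ℂ A] [CompleteSpace A]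
    (a : A) : A := (2 : ℂ)⁻¹ • (exp a - exp (-a))

noncomputable def coshA {A : Type*} [NormedRing A] [NormedAlgebra ℂ A] [CompleteSpace A]
    (a : A) : A := (2 : ℂ)⁻¹ • (exp a + exp (-a))

open scoped TensorProduct

/-- Conjugation by an exponential: if `[x,b] = c`, `[x,c] = d` and `[x,d] = 0`, then
`exp x * b = (b + c + d/2) * exp x`. -/
private lemma conj_exp {A : Type*} [NormedRing A] [NormedAlgebra ℂ A] [CompleteSpace A]
    (x b c d : A) (hc : x * b - b * x = c) (hd : x * c - c * x = d)
    (hxd : x * d - d * x = 0) :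
    exp x * b = (b + c + (2 : ℂ)⁻¹ • d) * exp x := by
  set f : ℂ → A := fun t => exp (t • (-x)) * ((b + t • c + (t ^ 2 / 2) • d) * exp (t • x))
    with hfdef
  have hderiv : ∀ t : ℂ, HasDerivAt f 0 t := by
    intro t
    have h1 : HasDerivAt (fun t : ℂ => exp (t • (-x))) (exp (t • (-x)) * (-x)) t :=
      hasDerivAt_exp_smul_const (-x) t
    have h2 : HasDerivAt (fun t : ℂ => exp (t • x)) (x * exp (t • x)) t :=
      hasDerivAt_exp_smul_const' x t
    have hP : HasDerivAt (fun t : ℂ => b + t • c + (t ^ 2 / 2) • d) (c + t • d) t := by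
      have hc1 : HasDerivAt (fun t : ℂ => t • c) ((1 : ℂ) • c) t :=
        (hasDerivAt_id t).smul_const c
      have hsq : HasDerivAt (fun t : ℂ => t ^ 2 / 2) t t := by
        simpa using (hasDerivAt_pow 2 t).div_const 2
      have hc2 : HasDerivAt (fun t : ℂ => (t ^ 2 / 2) • d) (t • d) t := hsq.smul_const d
      have hs := ((hasDerivAt_const t b).add hc1).add hc2
      simp only [one_smul, zero_add] at hs
      exact hs
    have hmul := h1.mul (hP.mul h2)
    have hkey : c + t • d
        = x * (b + t • c + (t ^ 2 / 2) • d) - (b + t • c + (t ^ 2 / 2) • d) * x := by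
      have expand : x * (b + t • c + (t ^ 2 / 2) • d) - (b + t • c + (t ^ 2 / 2) • d) * x
          = (x * b - b * x) + t • (x * c - c * x) + (t ^ 2 / 2) • (x * d - d * x) := by
        simp only [mul_add, add_mul, mul_smul_comm, smul_mul_assoc, smul_sub]
        abel
      rw [expand, hc, hd, hxd, smul_zero, add_zero]
    have hzero : exp (t • (-x)) * (-x) * ((b + t • c + (t ^ 2 / 2) • d) * exp (t • x))
        + exp (t • (-x)) * ((c + t • d) * exp (t • x)
          + (b + t • c + (t ^ 2 / 2) • d) * (x * exp (t • x))) = 0 := by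
      rw [hkey]
      generalize (b + t • c + (t ^ 2 / 2) • d) = P
      noncomm_ring
    simp only [Pi.mul_apply] at hmul
    rw [hzero] at hmul
    exact hmul
  have hconst : f 1 = f 0 :=
    is_const_of_deriv_eq_zero (fun t => (hderiv t).differentiableAt)
      (fun t => (hderiv t).deriv) 1 0
  have hf1 : f 1 = exp (-x) * ((b + c + (2 : ℂ)⁻¹ • d) * exp x) := by
    rw [hfdef]
    norm_num
  have hf0 : f 0 = b := by
    rw [hfdef]
    simp [exp_zero]
  have hEE : exp x * exp (-x) = 1 := by
    rw [← exp_add_of_commute_of_mem_ball (𝕂 := ℂ) ((Commute.refl x).neg_right) (by rw [expSeries_radius_eq_top]; simp) (by rw [expSeries_radius_eq_top]; simp)]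
    simp
  calc exp x * b = exp x * f 1 := by rw [hconst, hf0]
    _ = (exp x * exp (-x)) * ((b + c + (2 : ℂ)⁻¹ • d) * exp x) := by
        rw [hf1, mul_assoc]
    _ = (b + c + (2 : ℂ)⁻¹ • d) * exp x := by rw [hEE, one_mul]

/-- Purely algebraic tensor computation. -/
private lemma tensor_calc {A : Type*} [Ring A] [Algebra ℂ A] (h : ℂ) (X Y H E F : A)
    (hEF : E * F = 1) (hFE : F * E = 1)
    (hXE : X * E = E * X) (hXF : X * F = F * X)
    (hXY : X * Y = Y * X + H)
    (hHX : H * X = X * H + (2 / h * (2 : ℂ)⁻¹) • E - (2 / h * (2 : ℂ)⁻¹) • F)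
    (hEH : E * H = H * E - E * E + 1)
    (hFH : F * H = H * F - F * F + 1)
    (hEY : E * Y = Y * E + h • (H * E) + ((2 : ℂ)⁻¹ * h) • (1 : A)
      - ((2 : ℂ)⁻¹ * h) • (E * E))
    (hFY : F * Y = Y * F - h • (H * F) + ((2 : ℂ)⁻¹ * h) • (F * F)
      - ((2 : ℂ)⁻¹ * h) • (1 : A))
    (hHY : H * Y = Y * H - (Y * ((2 : ℂ)⁻¹ • (E + F)) + ((2 : ℂ)⁻¹ • (E + F)) * Y)) :
    ((X ⊗ₜ[ℂ] (1 : A) + (1 : A) ⊗ₜ X) * (Y ⊗ₜ E + F ⊗ₜ Y)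
        - (Y ⊗ₜ E + F ⊗ₜ Y) * (X ⊗ₜ (1 : A) + (1 : A) ⊗ₜ X) = H ⊗ₜ E + F ⊗ₜ H) ∧
    ((H ⊗ₜ[ℂ] E + F ⊗ₜ H) * (X ⊗ₜ (1 : A) + (1 : A) ⊗ₜ X)
        - (X ⊗ₜ (1 : A) + (1 : A) ⊗ₜ X) * (H ⊗ₜ E + F ⊗ₜ H)
      = (2 / h) • (((2 : ℂ)⁻¹ • (E - F)) ⊗ₜ ((2 : ℂ)⁻¹ • (E + F))
          + ((2 : ℂ)⁻¹ • (E + F)) ⊗ₜ ((2 : ℂ)⁻¹ • (E - F)))) ∧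
    ((H ⊗ₜ[ℂ] E + F ⊗ₜ H) * (Y ⊗ₜ E + F ⊗ₜ Y)
        - (Y ⊗ₜ E + F ⊗ₜ Y) * (H ⊗ₜ E + F ⊗ₜ H)
      = -((Y ⊗ₜ E + F ⊗ₜ Y) * (((2 : ℂ)⁻¹ • (E + F)) ⊗ₜ ((2 : ℂ)⁻¹ • (E + F))
            + ((2 : ℂ)⁻¹ • (E - F)) ⊗ₜ ((2 : ℂ)⁻¹ • (E - F)))
          + (((2 : ℂ)⁻¹ • (E + F)) ⊗ₜ ((2 : ℂ)⁻¹ • (E + F))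
            + ((2 : ℂ)⁻¹ • (E - F)) ⊗ₜ ((2 : ℂ)⁻¹ • (E - F))) * (Y ⊗ₜ E + F ⊗ₜ Y))) := by
  refine ⟨?_, ?_, ?_⟩ <;>
  · simp only [mul_add, add_mul, sub_mul, mul_sub, smul_mul_assoc, mul_smul_comm, smul_smul,
      Algebra.TensorProduct.tmul_mul_tmul, smul_add, smul_sub,
      TensorProduct.add_tmul, TensorProduct.tmul_add, TensorProduct.sub_tmul,
      TensorProduct.tmul_sub, TensorProduct.smul_tmul, TensorProduct.tmul_smul,
      one_mul, mul_one,
      hXY, hHX, hEH, hFH, hEY, hFY, hHY, hEF, hFE, hXE, hXF]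
    module

/-- The coproduct of `U_h(sl(2))` preserves the defining relations, i.e. it is an algebra
homomorphism.  Since `X ⊗ 1` and `1 ⊗ X` commute, one has
`sinh(hΔ(X)) = sinh(hX)⊗cosh(hX) + cosh(hX)⊗sinh(hX)` and
`cosh(hΔ(X)) = cosh(hX)⊗cosh(hX) + sinh(hX)⊗sinh(hX)`. -/
theorem jordanian_coproduct_hom {A : Type*} [NormedRing A] [NormedAlgebra ℂ A]
    [CompleteSpace A] (h : ℂ) (hh : h ≠ 0) (X Y H : A)
    (rel1 : X * Y - Y * X = H)
    (rel2 : H * X - X * H = (2 / h) • sinhA (h • X))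
    (rel3 : H * Y - Y * H = -(Y * coshA (h • X) + coshA (h • X) * Y)) :
    let ΔX : A ⊗[ℂ] A := X ⊗ₜ 1 + 1 ⊗ₜ X
    let ΔY : A ⊗[ℂ] A := Y ⊗ₜ exp (h • X) + exp (-(h • X)) ⊗ₜ Y
    let ΔH : A ⊗[ℂ] A := H ⊗ₜ exp (h • X) + exp (-(h • X)) ⊗ₜ H
    let ΔsinhhX : A ⊗[ℂ] A := sinhA (h • X) ⊗ₜ coshA (h • X) + coshA (h • X) ⊗ₜ sinhA (h • X)
    let ΔcoshhX : A ⊗[ℂ] A := coshA (h • X) ⊗ₜ coshA (h • X) + sinhA (h • X) ⊗ₜ sinhA (h • X)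
    ΔX * ΔY - ΔY * ΔX = ΔH ∧
    ΔH * ΔX - ΔX * ΔH = (2 / h) • ΔsinhhX ∧
    ΔH * ΔY - ΔY * ΔH = -(ΔY * ΔcoshhX + ΔcoshhX * ΔY) := by
  intro ΔX ΔY ΔH ΔsinhhX ΔcoshhX
  unfold ΔX ΔY ΔH ΔsinhhX ΔcoshhX
  simp only [sinhA, coshA] at rel2 rel3 ⊢
  set E : A := exp (h • X) with hE
  set F : A := exp (-(h • X)) with hF
  -- basic commutation facts
  have hXE : X * E = E * X := (((Commute.refl X).smul_right h).exp_right).eq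
  have hXF : X * F = F * X := ((((Commute.refl X).smul_right h).neg_right).exp_right).eq
  have cE : (h • X) * E = E * (h • X) := ((Commute.refl (h • X)).exp_right).eq
  have cF : (h • X) * F = F * (h • X) := (((Commute.refl (h • X)).neg_right).exp_right).eq
  have hEF : E * F = 1 := by
    rw [hE, hF, ← exp_add_of_commute_of_mem_ball (𝕂 := ℂ) ((Commute.refl (h • X)).neg_right) (by rw [expSeries_radius_eq_top]; simp) (by rw [expSeries_radius_eq_top]; simp)]
    simp
  have hFE : F * E = 1 := by
    rw [hE, hF, ← exp_add_of_commute_of_mem_ball (𝕂 := ℂ) ((Commute.refl (h • X)).neg_left) (by rw [expSeries_radius_eq_top]; simp) (by rw [expSeries_radius_eq_top]; simp)]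
    simp
  -- commutator of h•X with H and Y
  have hxH : (h • X) * H - H * (h • X) = F - E := by
    have h2 : X * H - H * X = -((2 / h) • ((2 : ℂ)⁻¹ • (E - F))) := by
      rw [← rel2]; abel
    have hs : h * (2 / h) * (2 : ℂ)⁻¹ = 1 := by field_simp
    calc (h • X) * H - H * (h • X) = h • (X * H - H * X) := by
          rw [smul_sub, ← smul_mul_assoc, ← mul_smul_comm]
      _ = F - E := by
          rw [h2, smul_neg, smul_smul, smul_smul, hs, one_smul, neg_sub]
  have hxY : (h • X) * Y - Y * (h • X) = h • H := by
    calc (h • X) * Y - Y * (h • X) = h • (X * Y - Y * X) := by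
          rw [smul_sub, ← smul_mul_assoc, ← mul_smul_comm]
      _ = h • H := by rw [rel1]
  -- the four exponential-commutation rules
  have hd0 : (h • X) * (F - E) - (F - E) * (h • X) = 0 := by
    rw [mul_sub, sub_mul, cE, cF]; abel
  have hEHc := conj_exp (h • X) H (F - E) 0 hxH (by rw [hd0]) (by simp)
  rw [← hE] at hEHc
  have hEH : E * H = H * E - E * E + 1 := by
    rw [hEHc, smul_zero, add_zero, add_mul, sub_mul, hFE]
    abel
  have hxH' : (-(h • X)) * H - H * (-(h • X)) = E - F := by
    calc (-(h • X)) * H - H * (-(h • X)) = -((h • X) * H - H * (h • X)) := by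
          rw [neg_mul, mul_neg]; abel
      _ = E - F := by rw [hxH, neg_sub]
  have hd0' : (-(h • X)) * (E - F) - (E - F) * (-(h • X)) = 0 := by
    rw [neg_mul, mul_neg, mul_sub, sub_mul, cE, cF]; abel
  have hFHc := conj_exp (-(h • X)) H (E - F) 0 hxH' (by rw [hd0']) (by simp)
  rw [← hF] at hFHc
  have hFH : F * H = H * F - F * F + 1 := by
    rw [hFHc, smul_zero, add_zero, add_mul, sub_mul, hEF]
    abel
  have hd7 : (h • X) * (h • H) - (h • H) * (h • X) = h • (F - E) := by
    calc (h • X) * (h • H) - (h • H) * (h • X) = h • ((h • X) * H - H * (h • X)) := by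
          rw [smul_sub, ← mul_smul_comm, ← smul_mul_assoc]
      _ = h • (F - E) := by rw [hxH]
  have hxd7 : (h • X) * (h • (F - E)) - (h • (F - E)) * (h • X) = 0 := by
    have e1 : (h • X) * (h • (F - E)) - (h • (F - E)) * (h • X)
        = h • ((h • X) * (F - E) - (F - E) * (h • X)) := by
      rw [mul_smul_comm h (h • X) (F - E), smul_mul_assoc h (F - E) (h • X), ← smul_sub]
    rw [e1, hd0, smul_zero]
  have hEYc := conj_exp (h • X) Y (h • H) (h • (F - E)) hxY hd7 hxd7
  rw [← hE] at hEYc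
  have hEY : E * Y = Y * E + h • (H * E) + ((2 : ℂ)⁻¹ * h) • (1 : A)
      - ((2 : ℂ)⁻¹ * h) • (E * E) := by
    rw [hEYc, smul_smul, add_mul, add_mul, smul_mul_assoc, smul_mul_assoc, sub_mul,
      hFE, smul_sub]
    abel
  have hxY' : (-(h • X)) * Y - Y * (-(h • X)) = -(h • H) := by
    calc (-(h • X)) * Y - Y * (-(h • X)) = -((h • X) * Y - Y * (h • X)) := by
          rw [neg_mul, mul_neg]; abel
      _ = -(h • H) := by rw [hxY]
  have hd8 : (-(h • X)) * (-(h • H)) - (-(h • H)) * (-(h • X)) = h • (F - E) := by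
    rw [neg_mul_neg, neg_mul_neg]; exact hd7
  have hxd8 : (-(h • X)) * (h • (F - E)) - (h • (F - E)) * (-(h • X)) = 0 := by
    calc (-(h • X)) * (h • (F - E)) - (h • (F - E)) * (-(h • X))
        = -((h • X) * (h • (F - E)) - (h • (F - E)) * (h • X)) := by
          rw [neg_mul, mul_neg]; abel
      _ = 0 := by rw [hxd7, neg_zero]
  have hFYc := conj_exp (-(h • X)) Y (-(h • H)) (h • (F - E)) hxY' hd8 hxd8
  rw [← hF] at hFYc
  have hFY : F * Y = Y * F - h • (H * F) + ((2 : ℂ)⁻¹ * h) • (F * F)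
      - ((2 : ℂ)⁻¹ * h) • (1 : A) := by
    rw [hFYc, smul_smul, add_mul, add_mul, neg_mul, smul_mul_assoc, smul_mul_assoc, sub_mul,
      hEF, smul_sub]
    abel
  -- remaining relations in rewritten form
  have hXY : X * Y = Y * X + H := by rw [← rel1]; abel
  have hHX : H * X = X * H + (2 / h * (2 : ℂ)⁻¹) • E - (2 / h * (2 : ℂ)⁻¹) • F := by
    have h2 : H * X = X * H + (2 / h) • ((2 : ℂ)⁻¹ • (E - F)) := by
      rw [← rel2]; abel
    rw [h2, smul_smul, smul_sub]
    abel
  have hHY : H * Y = Y * H - (Y * ((2 : ℂ)⁻¹ • (E + F)) + ((2 : ℂ)⁻¹ • (E + F)) * Y) := by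
    have h2 : H * Y = Y * H + (H * Y - Y * H) := by abel
    rw [h2, rel3]
    abel
  exact tensor_calc h X Y H E F hEF hFE hXE hXF hXY hHX hEH hFH hEY hFY hHY
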